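/- arXiv:2212.12705 — 2 statements merged into one kernel-verified Lean document; each statement's English description precedes it below -/
import Mathlib

section
/- The generating function identity ∑_{n≥0} c₁(n) qⁿ = (q⁴;q⁴)_∞ / (q;q)_∞ holds, where c₁(n) counts partitions of n in which either all parts are distinct, or there is an odd repeated part 2j−1 with all positive integers less than 2j−1 repeated and all parts greater than 2j distinct. -/
open PowerSeries Finset

def mult {n : ℕ} (p : Nat.Partition n) (k : ℕ) : ℕ := p.parts.count k

noncomputable def c1 (n : ℕ) : ℕ := Nat.card {p : Nat.Partition n //
  (∀ k, mult p k ≤ 1) ∨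
  (∃ j : ℕ, 1 ≤ j ∧ 2 ≤ mult p (2*j - 1) ∧
    (∀ i, 1 ≤ i → i < 2*j - 1 → 2 ≤ mult p i) ∧
    (∀ k, 2*j < k → mult p k ≤ 1))}

open Finset.HasAntidiagonal

namespace C1GF

/-- Gaussian binomial (in the variable `X^2`) defined via a Pascal recursion. -/
noncomputable def gb : ℕ → ℕ → ℤ⟦X⟧
  | _, 0 => 1
  | 0, _+1 => 0
  | n+1, k+1 => gb n (k+1) + X^(2*(n-k)) * gb n k

lemma gb_zero : ∀ n k, n < k → gb n k = 0
  | 0, _+1, _ => rfl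
  | n+1, k+1, h => by
      rw [gb, gb_zero n (k+1) (by omega), gb_zero n k (by omega), mul_zero, add_zero]

/-- `∏_{i=a+1}^{b} (1 - X^{2i})`. -/
noncomputable def PP (a b : ℕ) : ℤ⟦X⟧ := ∏ i ∈ Ioc a b, (1 - (X : ℤ⟦X⟧)^(2*i))

lemma PP_top {a b c : ℕ} (h : c = b + 1) (hab : a ≤ b) :
    PP a c = PP a b * (1 - (X : ℤ⟦X⟧)^(2*c)) := by
  subst h; rw [PP, PP, Finset.prod_Ioc_succ_top (by omega)]

lemma PP_mul_PP (a b c : ℕ) (h1 : a ≤ b) (h2 : b ≤ c) : PP a b * PP b c = PP a c :=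
  Finset.prod_Ioc_consecutive _ h1 h2

lemma constantCoeff_PP (a b : ℕ) : constantCoeff (R := ℤ) (PP a b) = 1 := by
  rw [PP, map_prod]
  apply Finset.prod_eq_one
  intro i hi
  rw [mem_Ioc] at hi
  rw [map_sub, map_one, map_pow, constantCoeff_X, zero_pow (by omega), sub_zero]

lemma PP_ne_zero (a b : ℕ) : PP a b ≠ 0 := fun h => by
  have := constantCoeff_PP a b
  rw [h, map_zero] at this
  exact one_ne_zero this.symm

lemma pow_mul_pow_eq (s t u : ℕ) (h : s + t = u) :
    (X : ℤ⟦X⟧)^s * X^t = X^u := by rw [← pow_add, h]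

lemma gb_mul : ∀ n, ∀ k ≤ n, gb n k * PP 0 k * PP 0 (n - k) = PP 0 n := by
  intro n
  induction n with
  | zero =>
    intro k hk
    have : k = 0 := by omega
    subst this; simp [gb, PP]
  | succ n ih =>
    intro k hk
    match k with
    | 0 => simp [gb, PP]
    | k+1 =>
      rw [gb]
      have hkn : k ≤ n := by omega
      have hsub : n + 1 - (k + 1) = n - k := by omega
      rw [hsub]
      have h1 : gb n (k+1) * PP 0 (k+1) * PP 0 (n - k) = PP 0 n * (1 - X^(2*(n-k))) := by
        rcases Nat.lt_or_ge k n with hlt | hge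
        · have h2 : PP 0 (n - k) = PP 0 (n - (k+1)) * (1 - (X:ℤ⟦X⟧)^(2*(n-k))) :=
            PP_top (by omega) (by omega)
          linear_combination (gb n (k+1) * PP 0 (k+1)) * h2
            + (1 - (X:ℤ⟦X⟧)^(2*(n-k))) * ih (k+1) hlt
        · rw [gb_zero n (k+1) (by omega)]
          have h0 : n - k = 0 := by omega
          rw [h0]
          simp
      have h2 : (X:ℤ⟦X⟧)^(2*(n-k)) * gb n k * PP 0 (k+1) * PP 0 (n - k)
          = PP 0 n * (X^(2*(n-k)) - X^(2*(n+1))) := by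
        have h3 : PP 0 (k+1) = PP 0 k * (1 - (X:ℤ⟦X⟧)^(2*(k+1))) := PP_top rfl (by omega)
        have hx : (X:ℤ⟦X⟧)^(2*(n-k)) * X^(2*(k+1)) = X^(2*(n+1)) :=
          pow_mul_pow_eq _ _ _ (by omega)
        linear_combination ((X:ℤ⟦X⟧)^(2*(n-k)) * gb n k * PP 0 (n-k)) * h3
          + ((X:ℤ⟦X⟧)^(2*(n-k)) * (1 - X^(2*(k+1)))) * ih k hkn - PP 0 n * hx
      have h3 : PP 0 (n+1) = PP 0 n * (1 - (X:ℤ⟦X⟧)^(2*(n+1))) := PP_top rfl (by omega)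
      linear_combination h1 + h2 - h3

lemma gb_mul' {n k : ℕ} (h : k ≤ n) : gb n k * PP 0 k = PP (n - k) n := by
  have h1 := gb_mul n k h
  have h2 : PP (n-k) n * PP 0 (n-k) = PP 0 n := by
    rw [mul_comm, PP_mul_PP 0 (n-k) n (by omega) (by omega)]
  rw [← h2] at h1
  exact mul_right_cancel₀ (PP_ne_zero 0 (n-k)) h1

/-- triangular number as a sum -/
def tri (r : ℕ) : ℕ := ∑ i ∈ Ioc 0 r, i

lemma tri_top {r s : ℕ} (h : s = r + 1) : tri s = tri r + s := by
  subst h; rw [tri, tri, Finset.sum_Ioc_succ_top (by omega)]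

lemma tri_ge (r : ℕ) : r ≤ tri r := by
  rcases Nat.eq_zero_or_pos r with h | h
  · simp [h]
  · exact Finset.single_le_sum (fun i _ => Nat.zero_le i) (by rw [mem_Ioc]; omega)

/-- `∏_{i=a+1}^{b} (1 + X^{2i})`. -/
noncomputable def QQ (a b : ℕ) : ℤ⟦X⟧ := ∏ i ∈ Ioc a b, (1 + (X : ℤ⟦X⟧)^(2*i))

lemma identity_A : ∀ m, QQ 0 m = ∑ r ∈ range (m+1), (X:ℤ⟦X⟧)^(2 * tri r) * gb m r := by
  intro m
  induction m with
  | zero => simp [QQ, tri, gb]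
  | succ m ih =>
    have hA : ∑ i ∈ range (m+1), (X:ℤ⟦X⟧)^(2 * tri (i+1)) * gb m (i+1)
        = (∑ r ∈ range (m+1), (X:ℤ⟦X⟧)^(2 * tri r) * gb m r) - 1 := by
      have h1 := Finset.sum_range_succ' (fun r => (X:ℤ⟦X⟧)^(2 * tri r) * gb m r) (m+1)
      have h2 : ∑ r ∈ range (m+1+1), (X:ℤ⟦X⟧)^(2 * tri r) * gb m r
          = ∑ r ∈ range (m+1), (X:ℤ⟦X⟧)^(2 * tri r) * gb m r := by
        rw [Finset.sum_range_succ, gb_zero m (m+1) (by omega), mul_zero, add_zero]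
      rw [h2] at h1
      have h0 : (X:ℤ⟦X⟧)^(2 * tri 0) * gb m 0 = 1 := by simp [tri, gb]
      rw [h0] at h1
      linear_combination -h1
    have hB : ∀ i ∈ range (m+1),
        (X:ℤ⟦X⟧)^(2 * tri (i+1)) * gb (m+1) (i+1)
        = (X:ℤ⟦X⟧)^(2 * tri (i+1)) * gb m (i+1)
          + X^(2*(m+1)) * ((X:ℤ⟦X⟧)^(2 * tri i) * gb m i) := by
      intro i hi
      rw [mem_range] at hi
      rw [gb, mul_add]
      congr 1
      have hx : (X:ℤ⟦X⟧)^(2 * tri (i+1)) * X^(2*(m-i)) = X^(2*(m+1)) * X^(2 * tri i) := by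
        rw [← pow_add, ← pow_add]
        congr 1
        have ht := tri_top (r := i) rfl
        omega
      linear_combination (gb m i) * hx
    rw [Finset.sum_range_succ']
    rw [Finset.sum_congr rfl hB, Finset.sum_add_distrib, ← Finset.mul_sum, hA]
    have h0 : (X:ℤ⟦X⟧)^(2 * tri 0) * gb (m+1) 0 = 1 := by simp [tri, gb]
    rw [h0]
    have hQ : QQ 0 (m+1) = QQ 0 m * (1 + (X:ℤ⟦X⟧)^(2*(m+1))) := by
      rw [QQ, QQ, Finset.prod_Ioc_succ_top (by omega)]
    rw [hQ, ih]
    ring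


lemma coeff_eq_of_dvd {n : ℕ} {a b : ℤ⟦X⟧} (h : (X:ℤ⟦X⟧)^(n+1) ∣ a - b) :
    coeff (R := ℤ) n a = coeff (R := ℤ) n b := by
  have h0 := (PowerSeries.X_pow_dvd_iff.mp h) n (by omega)
  rw [map_sub] at h0
  linarith

lemma dvd_prod_sub_one (s : Finset ℕ) (e : ℕ → ℕ) (c : ℕ) (h : ∀ i ∈ s, c ≤ e i) :
    (X:ℤ⟦X⟧)^c ∣ (∏ i ∈ s, (1 - X^(e i))) - 1 := by
  induction s using Finset.cons_induction with
  | empty => simp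
  | cons a s ha ih =>
    rw [Finset.prod_cons]
    have h1 : (X:ℤ⟦X⟧)^c ∣ (∏ i ∈ s, (1 - X^(e i))) - 1 :=
      ih (fun i hi => h i (Finset.mem_cons_of_mem hi))
    have h2 : (X:ℤ⟦X⟧)^c ∣ X^(e a) := pow_dvd_pow _ (h a (Finset.mem_cons_self a s))
    have h3 : (1 - (X:ℤ⟦X⟧)^(e a)) * (∏ i ∈ s, (1 - X^(e i))) - 1
        = ((∏ i ∈ s, (1 - X^(e i))) - 1) - X^(e a) * (∏ i ∈ s, (1 - X^(e i))) := by ring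
    rw [h3]
    exact dvd_sub h1 (h2.mul_right _)

/-- `∏_{i=1}^{n} (1 - X^{4i})`. -/
noncomputable def Rn (n : ℕ) : ℤ⟦X⟧ := ∏ i ∈ Ioc 0 n, (1 - (X:ℤ⟦X⟧)^(4*i))

lemma key_exact (n : ℕ) :
    Rn n = ∑ r ∈ range (n+1), (X:ℤ⟦X⟧)^(2*tri r) * (PP (n-r) n * PP r n) := by
  have h1 : Rn n = QQ 0 n * PP 0 n := by
    rw [Rn, QQ, PP, ← Finset.prod_mul_distrib]
    apply Finset.prod_congr rfl
    intro i hi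
    have hx : (X:ℤ⟦X⟧)^(4*i) = X^(2*i) * X^(2*i) := by rw [← pow_add]; congr 1; omega
    rw [hx]; ring
  rw [h1, identity_A, Finset.sum_mul]
  apply Finset.sum_congr rfl
  intro r hr
  rw [mem_range] at hr
  have hsplit : PP 0 n = PP 0 r * PP r n := (PP_mul_PP 0 r n (by omega) (by omega)).symm
  have hgb := gb_mul' (show r ≤ n by omega)
  linear_combination ((X:ℤ⟦X⟧)^(2*tri r) * gb n r) * hsplit
    + ((X:ℤ⟦X⟧)^(2*tri r) * PP r n) * hgb

lemma trunc (n : ℕ) :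
    coeff (R := ℤ) n (Rn n) = coeff (R := ℤ) n (∑ r ∈ range (n+1), (X:ℤ⟦X⟧)^(2*tri r) * PP r n) := by
  apply coeff_eq_of_dvd
  rw [key_exact, ← Finset.sum_sub_distrib]
  apply Finset.dvd_sum
  intro r hr
  rw [mem_range] at hr
  have h3 : (X:ℤ⟦X⟧)^(2*tri r) * (PP (n-r) n * PP r n) - X^(2*tri r) * PP r n
      = ((X:ℤ⟦X⟧)^(2*tri r) * PP r n) * (PP (n-r) n - 1) := by ring
  rw [h3]
  have hd : (X:ℤ⟦X⟧)^(2*(n-r+1)) ∣ PP (n-r) n - 1 := by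
    rw [PP]
    exact dvd_prod_sub_one _ _ _ (fun i hi => by rw [mem_Ioc] at hi; omega)
  have hcomb : (X:ℤ⟦X⟧)^(n+1) ∣ X^(2*tri r) * X^(2*(n-r+1)) := by
    rw [pow_mul_pow_eq _ _ (2*tri r + 2*(n-r+1)) rfl]
    apply pow_dvd_pow
    have := tri_ge r
    omega
  exact hcomb.trans (mul_dvd_mul (dvd_mul_right _ _) hd)

lemma coeff_X_big {n e : ℕ} (h : n < e) (f : ℤ⟦X⟧) : coeff (R := ℤ) n ((X:ℤ⟦X⟧)^e * f) = 0 := by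
  have hdvd : (X:ℤ⟦X⟧)^(n+1) ∣ X^e * f - 0 := by
    rw [sub_zero]
    exact (pow_dvd_pow (X:ℤ⟦X⟧) (by omega)).mul_right f
  rw [coeff_eq_of_dvd hdvd, map_zero]

lemma sum_pair (M : ℕ) (g : ℕ → ℤ⟦X⟧) :
    ∑ r ∈ range (2*M+1), g r = g 0 + ∑ j ∈ Icc 1 M, (g (2*j-1) + g (2*j)) := by
  induction M with
  | zero => simp
  | succ M ih =>
    have h1 : 2*(M+1)+1 = (2*M+1) + 1 + 1 := by omega
    rw [h1, Finset.sum_range_succ, Finset.sum_range_succ, ih,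
      Finset.sum_Icc_succ_top (by omega)]
    have e1 : 2*(M+1)-1 = 2*M+1 := by omega
    have e2 : 2*(M+1) = 2*M+1+1 := by omega
    rw [e1, e2]
    ring

lemma final_identity (n : ℕ) :
    coeff (R := ℤ) n (PP 0 n + ∑ j ∈ Icc 1 (n/2), (X:ℤ⟦X⟧)^(2*tri (2*j-1)) * PP (2*j) n)
      = coeff (R := ℤ) n (Rn n) := by
  rw [trunc]
  have hf0 : (X:ℤ⟦X⟧)^(2*tri 0) * PP 0 n = PP 0 n := by
    simp [tri]
  have hpair : ∀ j ∈ Icc 1 (n/2),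
      ((X:ℤ⟦X⟧)^(2*tri (2*j-1)) * PP (2*j-1) n) + ((X:ℤ⟦X⟧)^(2*tri (2*j)) * PP (2*j) n)
        = (X:ℤ⟦X⟧)^(2*tri (2*j-1)) * PP (2*j) n := by
    intro j hj
    rw [mem_Icc] at hj
    have h2j : 2*j ≤ n := by omega
    have hsingle : PP (2*j-1) (2*j) = 1 - (X:ℤ⟦X⟧)^(4*j) := by
      rw [PP]
      have : Ioc (2*j-1) (2*j) = {2*j} := by
        ext x; simp only [mem_Ioc, Finset.mem_singleton]; omega
      rw [this, Finset.prod_singleton]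
      congr 2
      omega
    have hP : PP (2*j-1) n = (1 - (X:ℤ⟦X⟧)^(4*j)) * PP (2*j) n := by
      rw [← PP_mul_PP (2*j-1) (2*j) n (by omega) h2j, hsingle]
    have hx : (X:ℤ⟦X⟧)^(2*tri (2*j)) = X^(2*tri (2*j-1)) * X^(4*j) := by
      rw [← pow_add]
      congr 1
      have := tri_top (r := 2*j-1) (s := 2*j) (by omega)
      omega
    rw [hP, hx]
    ring
  have hmain : coeff (R := ℤ) n (∑ r ∈ range (n+1), (X:ℤ⟦X⟧)^(2*tri r) * PP r n)
      = coeff (R := ℤ) n ((X:ℤ⟦X⟧)^(2*tri 0) * PP 0 n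
          + ∑ j ∈ Icc 1 (n/2), (((X:ℤ⟦X⟧)^(2*tri (2*j-1)) * PP (2*j-1) n)
            + ((X:ℤ⟦X⟧)^(2*tri (2*j)) * PP (2*j) n))) := by
    rcases Nat.even_or_odd n with he | ho
    · have hn : n + 1 = 2*(n/2)+1 := by
        obtain ⟨t, ht⟩ := he; omega
      rw [hn, sum_pair]
    · have hn : n + 1 = (2*(n/2)+1) + 1 := by
        obtain ⟨t, ht⟩ := ho; omega
      rw [hn, Finset.sum_range_succ, sum_pair, map_add, map_add]
      have hlast : coeff (R := ℤ) n ((X:ℤ⟦X⟧)^(2*tri (2*(n/2)+1)) * PP (2*(n/2)+1) n) = 0 := by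
        apply coeff_X_big
        have h1 : 2*(n/2)+1 = n := by obtain ⟨t, ht⟩ := ho; omega
        have := tri_ge (2*(n/2)+1)
        omega
      rw [hlast, add_zero]
  rw [hmain, map_add, map_add, map_sum, map_sum]
  congr 1
  · rw [hf0]
  · apply Finset.sum_congr rfl
    intro j hj
    rw [← hpair j hj, map_add]

noncomputable section
open scoped Classical

variable {α : Type*}

/-- A convenience constructor for the power series whose coefficients indicate a subset. -/
def indicatorSeries (α : Type*) [Semiring α] (s : Set ℕ) : PowerSeries α :=
  PowerSeries.mk fun n => if n ∈ s then 1 else 0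

theorem coeff_indicator (s : Set ℕ) [Semiring α] (n : ℕ) :
    coeff (R := α) n (indicatorSeries _ s) = if n ∈ s then 1 else 0 :=
  coeff_mk _ _

-- The main workhorse of the partition theorem proof.
theorem partialGF_prop (α : Type*) [CommSemiring α] (n : ℕ) (s : Finset ℕ) (hs : ∀ i ∈ s, 0 < i)
    (c : ℕ → Set ℕ) (hc : ∀ i, i ∉ s → 0 ∈ c i) :
    #{p : n.Partition | (∀ j, p.parts.count j ∈ c j) ∧ ∀ j ∈ p.parts, j ∈ s} =
      coeff (R := α) n (∏ i ∈ s, indicatorSeries α ((· * i) '' c i)) := by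
  simp_rw [coeff_prod, coeff_indicator, prod_boole, sum_boole]
  apply congr_arg
  simp only [mem_univ, forall_true_left, not_and, not_forall, exists_prop,
    Set.mem_image, not_exists]
  set φ : (a : Nat.Partition n) →
    a ∈ filter (fun p ↦ (∀ (j : ℕ), Multiset.count j p.parts ∈ c j) ∧ ∀ j ∈ p.parts, j ∈ s) univ →
    ℕ →₀ ℕ := fun p _ => {
      toFun := fun i => Multiset.count i p.parts • i
      support := Finset.filter (fun i => i ≠ 0) p.parts.toFinset
      mem_support_toFun := fun a => by
        simp only [smul_eq_mul, ne_eq, mul_eq_zero, Multiset.count_eq_zero]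
        rw [not_or, not_not]
        simp only [Multiset.mem_toFinset, not_not, mem_filter] }
  refine Finset.card_bij φ ?_ ?_ ?_
  · intro a ha
    simp only [φ, not_forall, not_exists, not_and, exists_prop, mem_filter]
    rw [mem_finsuppAntidiag]
    dsimp only [ne_eq, smul_eq_mul, id_eq, eq_mpr_eq_cast, le_eq_subset, Finsupp.coe_mk]
    simp only [mem_univ, forall_true_left, not_and, not_forall, exists_prop,
      mem_filter, true_and] at ha
    refine ⟨⟨?_, fun i ↦ ?_⟩, fun i _ ↦ ⟨a.parts.count i, ha.1 i, rfl⟩⟩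
    · conv_rhs => simp [← a.parts_sum]
      rw [sum_multiset_count_of_subset _ s]
      · simp only [smul_eq_mul]
      · intro i
        simp only [Multiset.mem_toFinset, not_not, mem_filter]
        apply ha.2
    · simp only [ne_eq, Multiset.mem_toFinset, not_not, mem_filter, and_imp]
      exact fun hi _ ↦ ha.2 i hi
  · intro p₁ hp₁ p₂ hp₂ h
    apply Nat.Partition.ext
    simp only [true_and, mem_univ, mem_filter] at hp₁ hp₂
    ext i
    simp only [φ, ne_eq, Multiset.mem_toFinset, not_not, smul_eq_mul, Finsupp.mk.injEq] at h
    by_cases hi : i = 0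
    · rw [hi]
      rw [Multiset.count_eq_zero_of_notMem]
      · rw [Multiset.count_eq_zero_of_notMem]
        intro a; exact Nat.lt_irrefl 0 (hs 0 (hp₂.2 0 a))
      intro a; exact Nat.lt_irrefl 0 (hs 0 (hp₁.2 0 a))
    · rw [← mul_left_inj' hi]
      rw [funext_iff] at h
      exact h.2 i
  · simp only [φ, mem_filter, mem_finsuppAntidiag, mem_univ, exists_prop, true_and, and_assoc]
    rintro f ⟨hf, hf₃, hf₄⟩
    have hf' : f ∈ finsuppAntidiag s n := mem_finsuppAntidiag.mpr ⟨hf, hf₃⟩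
    simp only [mem_finsuppAntidiag] at hf'
    refine ⟨⟨∑ i ∈ s, Multiset.replicate (f i / i) i, ?_, ?_⟩, ?_, ?_, ?_⟩
    · intro i hi
      simp only [exists_prop, Multiset.mem_sum, mem_map, Function.Embedding.coeFn_mk] at hi
      rcases hi with ⟨t, ht, z⟩
      apply hs
      rwa [Multiset.eq_of_mem_replicate z]
    · simp_rw [Multiset.sum_sum, Multiset.sum_replicate, Nat.nsmul_eq_mul]
      rw [← hf'.1]
      refine sum_congr rfl fun i hi => Nat.div_mul_cancel ?_
      rcases hf₄ i hi with ⟨w, _, hw₂⟩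
      rw [← hw₂]
      exact dvd_mul_left _ _
    · intro i
      simp_rw [Multiset.count_sum', Multiset.count_replicate, sum_ite_eq']
      split_ifs with h
      · rcases hf₄ i h with ⟨w, hw₁, hw₂⟩
        rwa [← hw₂, Nat.mul_div_cancel _ (hs i h)]
      · exact hc _ h
    · intro i hi
      rw [Multiset.mem_sum] at hi
      rcases hi with ⟨j, hj₁, hj₂⟩
      rwa [Multiset.eq_of_mem_replicate hj₂]
    · ext i
      simp_rw [Multiset.count_sum', Multiset.count_replicate, sum_ite_eq']
      simp only [ne_eq, Multiset.mem_toFinset, not_not, smul_eq_mul, ite_mul,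
        zero_mul, Finsupp.coe_mk]
      split_ifs with h
      · apply Nat.div_mul_cancel
        rcases hf₄ i h with ⟨w, _, hw₂⟩
        apply Dvd.intro_left _ hw₂
      · apply symm
        rw [← Finsupp.notMem_support_iff]
        exact notMem_mono hf'.2 h


/-- indicator of multiples of `i` -/
def Msr (i : ℕ) : ℤ⟦X⟧ := indicatorSeries ℤ {k | i ∣ k}

/-- indicator of multiples `m*i` with `m ≥ 2` -/
def Ssr (i : ℕ) : ℤ⟦X⟧ := indicatorSeries ℤ {k | i ∣ k ∧ 2*i ≤ k}

lemma pow_mul_pow_eq' (s t u : ℕ) (h : s + t = u) :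
    (X : ℤ⟦X⟧)^s * X^t = X^u := by rw [← pow_add, h]

lemma coeff_X_big' {n e : ℕ} (h : n < e) (f : ℤ⟦X⟧) : coeff (R := ℤ) n ((X:ℤ⟦X⟧)^e * f) = 0 := by
  have hdvd : (X:ℤ⟦X⟧)^(n+1) ∣ X^e * f := (pow_dvd_pow (X:ℤ⟦X⟧) (by omega)).mul_right f
  exact PowerSeries.X_pow_dvd_iff.mp hdvd n (by omega)

lemma one_sub_mul_M {i : ℕ} (h : 0 < i) : (1 - (X:ℤ⟦X⟧)^i) * Msr i = 1 := by
  ext n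
  rw [sub_mul, one_mul, map_sub]
  by_cases hin : i ≤ n
  · obtain ⟨d, rfl⟩ : ∃ d, n = d + i := ⟨n - i, by omega⟩
    rw [PowerSeries.coeff_X_pow_mul]
    rw [Msr, coeff_indicator, coeff_indicator, PowerSeries.coeff_one]
    simp only [Set.mem_setOf_eq, Nat.dvd_add_self_right]
    rw [if_neg (by omega : ¬ (d + i = 0))]
    by_cases hdd : i ∣ d <;> simp [hdd]
  · rw [coeff_X_big' (by omega), sub_zero, Msr, coeff_indicator, PowerSeries.coeff_one]
    rcases Nat.eq_zero_or_pos n with h0 | h0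
    · subst h0; simp
    · rw [if_neg, if_neg (by omega)]
      intro hd
      exact absurd (Nat.le_of_dvd h0 hd) (by omega)

lemma M_split {i : ℕ} (h : 0 < i) : Msr i = 1 + (X:ℤ⟦X⟧)^i + Ssr i := by
  ext n
  rw [Msr, Ssr, map_add, map_add, coeff_indicator, coeff_indicator, PowerSeries.coeff_one,
    PowerSeries.coeff_X_pow]
  simp only [Set.mem_setOf_eq]
  by_cases hd : i ∣ n
  · obtain ⟨c, rfl⟩ := hd
    match c with
    | 0 =>
      simp only [Nat.mul_zero]
      have h1 : ¬((0:ℕ) = i) := by omega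
      have h2 : ¬(i ∣ 0 ∧ 2*i ≤ 0) := fun hc => absurd hc.2 (by omega)
      simp [h1, h2, h.ne']
    | 1 => rw [if_pos (dvd_mul_right i 1), if_neg (by omega), if_pos (by omega), if_neg (by omega)]; ring
    | (c+2) =>
      have h1 : 2*i ≤ i*(c+2) := by
        calc 2*i ≤ (c+2)*i := Nat.mul_le_mul_right i (by omega)
        _ = i*(c+2) := by ring
      have h2 : i*(c+2) ≠ 0 := by positivity
      have h3 : i*(c+2) ≠ i := by
        intro hcon
        nth_rewrite 2 [show i = i*1 by ring] at hcon
        have := Nat.eq_of_mul_eq_mul_left h hcon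
        omega
      rw [if_pos (dvd_mul_right i (c+2)), if_neg h2, if_neg h3,
        if_pos ⟨dvd_mul_right i (c+2), h1⟩]
      ring
  · have hn0 : n ≠ 0 := fun hcon => hd (hcon ▸ dvd_zero i)
    have hni : n ≠ i := fun hcon => hd (hcon ▸ dvd_refl i)
    rw [if_neg hd, if_neg hn0, if_neg hni, if_neg (fun hcon => hd hcon.1)]
    ring

lemma one_sub_mul_S {i : ℕ} (h : 0 < i) : (1 - (X:ℤ⟦X⟧)^i) * Ssr i = X^(2*i) := by
  have hs : Ssr i = Msr i - (1 + (X:ℤ⟦X⟧)^i) := by rw [M_split h]; ring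
  rw [hs, mul_sub, one_sub_mul_M h]
  have hxx : (X:ℤ⟦X⟧)^i * X^i = X^(2*i) := pow_mul_pow_eq' _ _ _ (by omega)
  linear_combination hxx

lemma indicator_pair {i : ℕ} (h : 0 < i) :
    indicatorSeries ℤ {0, i} = 1 + (X:ℤ⟦X⟧)^i := by
  ext n
  rw [coeff_indicator, map_add, PowerSeries.coeff_one, PowerSeries.coeff_X_pow]
  simp only [Set.mem_insert_iff, Set.mem_singleton_iff]
  split_ifs <;> omega

lemma img_pair (i : ℕ) : ((· * i) '' {0, 1} : Set ℕ) = {0, i} := by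
  rw [Set.image_pair]
  simp

lemma img_univ (i : ℕ) : ((· * i) '' Set.univ : Set ℕ) = {k | i ∣ k} := by
  ext k
  constructor
  · rintro ⟨m, -, rfl⟩
    exact Dvd.intro_left m rfl
  · rintro ⟨c, rfl⟩
    exact ⟨c, trivial, mul_comm c i⟩

lemma img_Ici {i : ℕ} (h : 0 < i) :
    ((· * i) '' Set.Ici 2 : Set ℕ) = {k | i ∣ k ∧ 2*i ≤ k} := by
  ext k
  constructor
  · rintro ⟨m, hm, rfl⟩
    refine ⟨Dvd.intro_left m rfl, ?_⟩
    calc 2*i ≤ m*i := Nat.mul_le_mul_right i hm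
    _ = m * i := rfl
  · rintro ⟨⟨c, rfl⟩, h2⟩
    match c with
    | 0 => simp at h2; omega
    | 1 => exfalso; simp at h2; omega
    | (c+2) => exact ⟨c+2, by simp [Set.mem_Ici], mul_comm (c+2) i⟩


-- ## Counting section

/-- multiplicity condition for the `j`-th exceptional case -/
def Qc (j : ℕ) {a : ℕ} (p : Nat.Partition a) : Prop :=
  2 ≤ mult p (2*j - 1) ∧
    (∀ i, 1 ≤ i → i < 2*j - 1 → 2 ≤ mult p i) ∧
    (∀ k, 2*j < k → mult p k ≤ 1)

def Cd : ℕ → Set ℕ := fun _ => {0, 1}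

def Cc (j : ℕ) : ℕ → Set ℕ := fun i =>
  if 1 ≤ i ∧ i ≤ 2*j - 1 then Set.Ici 2 else if i = 2*j then Set.univ else {0, 1}

noncomputable def Hd (n : ℕ) : ℤ⟦X⟧ := ∏ i ∈ Icc 1 n, indicatorSeries ℤ ((· * i) '' Cd i)

noncomputable def Hc (j n : ℕ) : ℤ⟦X⟧ := ∏ i ∈ Icc 1 n, indicatorSeries ℤ ((· * i) '' Cc j i)

lemma parts_le {a : ℕ} (p : Nat.Partition a) {i : ℕ} (hi : i ∈ p.parts) : i ≤ a := by
  conv_rhs => rw [← p.parts_sum]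
  exact Multiset.single_le_sum (fun x _ => Nat.zero_le x) i hi

lemma parts_mem_Icc {a n : ℕ} (p : Nat.Partition a) (ha : a ≤ n) :
    ∀ i ∈ p.parts, i ∈ Icc 1 n := by
  intro i hi
  rw [mem_Icc]
  exact ⟨p.parts_pos hi, le_trans (parts_le p hi) ha⟩

lemma mult_mul_le {a : ℕ} (p : Nat.Partition a) (k : ℕ) : k * mult p k ≤ a := by
  have h1 : Multiset.replicate (mult p k) k ≤ p.parts :=
    Multiset.le_count_iff_replicate_le.mp le_rfl
  obtain ⟨u, hu⟩ := Multiset.le_iff_exists_add.mp h1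
  have h2 : p.parts.sum = (Multiset.replicate (mult p k) k).sum + u.sum := by
    rw [← Multiset.sum_add, ← hu]
  rw [p.parts_sum, Multiset.sum_replicate, smul_eq_mul] at h2
  rw [mul_comm]
  omega

lemma count_zero_of_big {a : ℕ} (p : Nat.Partition a) {k : ℕ} (hk : a < k) :
    mult p k = 0 := by
  rw [show mult p k = p.parts.count k from rfl, Multiset.count_eq_zero]
  intro hmem
  exact absurd (parts_le p hmem) (by omega)

lemma cnt_d {a n : ℕ} (ha : a ≤ n) :
    (#(univ.filter (fun p : Nat.Partition a => ∀ k, mult p k ≤ 1)) : ℤ)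
      = coeff (R := ℤ) a (Hd n) := by
  rw [Hd, ← partialGF_prop ℤ a (Icc 1 n) (fun i hi => (mem_Icc.mp hi).1) Cd
    (fun i _ => Set.mem_insert 0 {1})]
  congr 2
  apply Finset.filter_congr
  intro p _
  constructor
  · intro hp
    refine ⟨fun k => ?_, parts_mem_Icc p ha⟩
    have := hp k
    rw [Cd, Set.mem_insert_iff, Set.mem_singleton_iff]
    simp only [mult] at this
    omega
  · rintro ⟨h1, -⟩ k
    have := h1 k
    rw [Cd, Set.mem_insert_iff, Set.mem_singleton_iff] at this
    simp only [mult]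
    omega

lemma cnt_c {a n j : ℕ} (ha : a ≤ n) (hj : 1 ≤ j) (hjn : 2*j - 1 ≤ n) :
    (#(univ.filter (fun p : Nat.Partition a => Qc j p)) : ℤ)
      = coeff (R := ℤ) a (Hc j n) := by
  have hc : ∀ i, i ∉ Icc 1 n → 0 ∈ Cc j i := by
    intro i hi
    rw [mem_Icc] at hi
    rw [Cc]
    split_ifs with h1 h2
    · omega
    · trivial
    · exact Set.mem_insert 0 {1}
  rw [Hc, ← partialGF_prop ℤ a (Icc 1 n) (fun i hi => (mem_Icc.mp hi).1) (Cc j) hc]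
  congr 2
  apply Finset.filter_congr
  intro p _
  constructor
  · rintro ⟨hq1, hq2, hq3⟩
    refine ⟨fun i => ?_, parts_mem_Icc p ha⟩
    rw [Cc]
    split_ifs with h1 h2
    · rcases Nat.lt_or_ge i (2*j-1) with hlt | hge
      · exact hq2 i h1.1 hlt
      · have : i = 2*j - 1 := by omega
        rw [this]
        exact hq1
    · trivial
    · rw [Set.mem_insert_iff, Set.mem_singleton_iff]
      rcases Nat.eq_zero_or_pos i with h0 | h0
      · subst h0
        have : mult p 0 = 0 := by
          rw [show mult p 0 = p.parts.count 0 from rfl, Multiset.count_eq_zero]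
          intro hmem
          exact absurd (p.parts_pos hmem) (by omega)
        simp only [mult] at this ⊢
        omega
      · have : 2*j < i := by omega
        have := hq3 i this
        simp only [mult] at this ⊢
        omega
  · rintro ⟨h1, -⟩
    refine ⟨?_, fun i hi1 hi2 => ?_, fun k hk => ?_⟩
    · have := h1 (2*j-1)
      rw [Cc, if_pos (by omega : 1 ≤ 2*j-1 ∧ 2*j-1 ≤ 2*j-1)] at this
      exact this
    · have := h1 i
      rw [Cc, if_pos (by omega : 1 ≤ i ∧ i ≤ 2*j-1)] at this
      exact this
    · have := h1 k
      rw [Cc, if_neg (by omega), if_neg (by omega), Set.mem_insert_iff,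
        Set.mem_singleton_iff] at this
      simp only [mult] at this ⊢
      omega

lemma Ioc_zero_eq_Icc_one (n : ℕ) : Ioc 0 n = Icc 1 n := by rw [← Finset.Icc_add_one_left_eq_Ioc]; rfl

lemma Hd_mul (n : ℕ) :
    Hd n * (∏ k ∈ Icc 1 n, (1 - (X:ℤ⟦X⟧)^k)) = PP 0 n := by
  rw [Hd, PP, Ioc_zero_eq_Icc_one, ← Finset.prod_mul_distrib]
  apply Finset.prod_congr rfl
  intro i hi
  rw [mem_Icc] at hi
  simp only [Cd]
  rw [img_pair, indicator_pair (by omega)]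
  have hxx : (X:ℤ⟦X⟧)^i * X^i = X^(2*i) := pow_mul_pow_eq' _ _ _ (by omega)
  linear_combination -hxx

lemma Hc_mul {n j : ℕ} (hj : 1 ≤ j) (h2j : 2*j ≤ n) :
    Hc j n * (∏ k ∈ Icc 1 n, (1 - (X:ℤ⟦X⟧)^k))
      = (X:ℤ⟦X⟧)^(2 * tri (2*j-1)) * PP (2*j) n := by
  rw [Hc, ← Finset.prod_mul_distrib]
  have step : ∀ i ∈ Icc 1 n,
      indicatorSeries ℤ ((· * i) '' Cc j i) * (1 - (X:ℤ⟦X⟧)^i)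
      = (if 1 ≤ i ∧ i ≤ 2*j - 1 then (X:ℤ⟦X⟧)^(2*i)
          else if i = 2*j then 1 else 1 - (X:ℤ⟦X⟧)^(2*i)) := by
    intro i hi
    rw [mem_Icc] at hi
    simp only [Cc]
    split_ifs with h1 h2
    · rw [img_Ici (by omega), mul_comm]
      exact one_sub_mul_S (by omega)
    · rw [img_univ, mul_comm]
      exact one_sub_mul_M (by omega)
    · rw [img_pair, indicator_pair (by omega)]
      have hxx : (X:ℤ⟦X⟧)^i * X^i = X^(2*i) := pow_mul_pow_eq' _ _ _ (by omega)
      linear_combination -hxx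
  rw [Finset.prod_congr rfl step, ← Ioc_zero_eq_Icc_one,
    ← Finset.prod_Ioc_consecutive _ (show (0:ℕ) ≤ 2*j by omega) h2j,
    ← Finset.prod_Ioc_consecutive _ (show (0:ℕ) ≤ 2*j-1 by omega) (show 2*j-1 ≤ 2*j by omega)]
  have p1 : ∏ i ∈ Ioc 0 (2*j-1), (if 1 ≤ i ∧ i ≤ 2*j - 1 then (X:ℤ⟦X⟧)^(2*i)
      else if i = 2*j then 1 else 1 - (X:ℤ⟦X⟧)^(2*i)) = (X:ℤ⟦X⟧)^(2 * tri (2*j-1)) := by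
    rw [Finset.prod_congr rfl (fun i hi => if_pos (by rw [mem_Ioc] at hi; omega)),
      Finset.prod_pow_eq_pow_sum, ← Finset.mul_sum, tri]
  have p2 : ∏ i ∈ Ioc (2*j-1) (2*j), (if 1 ≤ i ∧ i ≤ 2*j - 1 then (X:ℤ⟦X⟧)^(2*i)
      else if i = 2*j then 1 else 1 - (X:ℤ⟦X⟧)^(2*i)) = 1 := by
    have hIoc : Ioc (2*j-1) (2*j) = {2*j} := by
      ext x; simp only [mem_Ioc, Finset.mem_singleton]; omega
    rw [hIoc, Finset.prod_singleton, if_neg (by omega), if_pos rfl]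
  have p3 : ∏ i ∈ Ioc (2*j) n, (if 1 ≤ i ∧ i ≤ 2*j - 1 then (X:ℤ⟦X⟧)^(2*i)
      else if i = 2*j then 1 else 1 - (X:ℤ⟦X⟧)^(2*i)) = PP (2*j) n := by
    rw [PP]
    exact Finset.prod_congr rfl (fun i hi => by
      rw [mem_Ioc] at hi
      rw [if_neg (by omega), if_neg (by omega)])
  rw [p1, p2, p3, mul_one]

lemma c1_eq {a n : ℕ} (ha : a ≤ n) :
    (c1 a : ℤ) = coeff (R := ℤ) a (Hd n + ∑ j ∈ Icc 1 (n/2), Hc j n) := by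
  have hcard : c1 a = #(univ.filter (fun p : Nat.Partition a =>
      (∀ k, mult p k ≤ 1) ∨ ∃ j, 1 ≤ j ∧ Qc j p)) := by
    rw [c1, Nat.card_eq_fintype_card, Fintype.card_subtype]
    congr 1
  have hsetsplit : univ.filter (fun p : Nat.Partition a =>
        (∀ k, mult p k ≤ 1) ∨ ∃ j, 1 ≤ j ∧ Qc j p)
      = (univ.filter (fun p : Nat.Partition a => ∀ k, mult p k ≤ 1)) ∪
        (Icc 1 (n/2)).biUnion (fun j => univ.filter (fun p : Nat.Partition a => Qc j p)) := by
    ext p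
    simp only [mem_filter, mem_union, mem_biUnion, mem_univ, true_and, mem_Icc]
    constructor
    · rintro (h | ⟨j, hj1, hj2⟩)
      · exact Or.inl h
      · refine Or.inr ⟨j, ⟨hj1, ?_⟩, hj2⟩
        have hb := mult_mul_le p (2*j-1)
        have h2 : 2 ≤ mult p (2*j-1) := hj2.1
        have h4 : (2*j-1) * 2 ≤ a := le_trans (Nat.mul_le_mul_left _ h2) hb
        omega
    · rintro (h | ⟨j, ⟨hj1, _⟩, hj2⟩)
      · exact Or.inl h
      · exact Or.inr ⟨j, hj1, hj2⟩
  have hdisj : Disjoint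
      (univ.filter (fun p : Nat.Partition a => ∀ k, mult p k ≤ 1))
      ((Icc 1 (n/2)).biUnion (fun j => univ.filter (fun p : Nat.Partition a => Qc j p))) := by
    rw [Finset.disjoint_left]
    intro p hp hp2
    rw [mem_filter] at hp
    rw [mem_biUnion] at hp2
    obtain ⟨j, hj, hpj⟩ := hp2
    rw [mem_filter] at hpj
    have h1 := hp.2 (2*j-1)
    have h2 := hpj.2.1
    omega
  have hpairdisj : ∀ j ∈ Icc 1 (n/2), ∀ j' ∈ Icc 1 (n/2), j ≠ j' →
      Disjoint (univ.filter (fun p : Nat.Partition a => Qc j p))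
        (univ.filter (fun p : Nat.Partition a => Qc j' p)) := by
    intro j hj j' hj' hne
    rw [Finset.disjoint_left]
    intro p hp hp'
    rw [mem_filter] at hp hp'
    rw [mem_Icc] at hj hj'
    rcases Nat.lt_or_gt_of_ne hne with h | h
    · have h1 := hp.2.2.2 (2*j'-1) (by omega)
      have h2 := hp'.2.1
      omega
    · have h1 := hp'.2.2.2 (2*j-1) (by omega)
      have h2 := hp.2.1
      omega
  rw [hcard, hsetsplit, Finset.card_union_of_disjoint hdisj, Finset.card_biUnion hpairdisj]
  push_cast
  rw [map_add, map_sum, cnt_d ha]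
  congr 1
  apply Finset.sum_congr rfl
  intro j hj
  rw [mem_Icc] at hj
  exact cnt_c ha hj.1 (by omega)

end
end C1GF

/-- `∑ c₁(n) qⁿ = (q⁴;q⁴)_∞ / (q;q)_∞`, stated coefficientwise:
multiplying through by `(q;q)_∞`, for each `n` only the factors with index `≤ n` can affect
the `n`-th coefficient, so truncated products capture the full identity. -/
theorem c1_generating_function (n : ℕ) :
    PowerSeries.coeff (R := ℤ) n
      (PowerSeries.mk (fun m => (c1 m : ℤ)) * ∏ k ∈ Finset.Icc 1 n, (1 - (X : ℤ⟦X⟧) ^ k)) =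
    PowerSeries.coeff (R := ℤ) n (∏ k ∈ Finset.Icc 1 n, (1 - (X : ℤ⟦X⟧) ^ (4 * k))) := by
  rw [PowerSeries.coeff_mul]
  have hstep : ∀ ab ∈ antidiagonal n,
      coeff (R := ℤ) ab.1 (PowerSeries.mk fun m => (c1 m : ℤ))
          * coeff (R := ℤ) ab.2 (∏ k ∈ Finset.Icc 1 n, (1 - (X : ℤ⟦X⟧) ^ k))
      = coeff (R := ℤ) ab.1 (C1GF.Hd n + ∑ j ∈ Finset.Icc 1 (n/2), C1GF.Hc j n)
          * coeff (R := ℤ) ab.2 (∏ k ∈ Finset.Icc 1 n, (1 - (X : ℤ⟦X⟧) ^ k)) := by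
    intro ab hab
    rw [Finset.HasAntidiagonal.mem_antidiagonal] at hab
    rw [coeff_mk, C1GF.c1_eq (show ab.1 ≤ n by omega)]
  rw [Finset.sum_congr rfl hstep, ← PowerSeries.coeff_mul, add_mul, Finset.sum_mul,
    C1GF.Hd_mul]
  have hsum : ∀ j ∈ Finset.Icc 1 (n/2),
      C1GF.Hc j n * (∏ k ∈ Finset.Icc 1 n, (1 - (X : ℤ⟦X⟧) ^ k))
      = (X:ℤ⟦X⟧)^(2 * C1GF.tri (2*j-1)) * C1GF.PP (2*j) n := by
    intro j hj
    rw [Finset.mem_Icc] at hj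
    exact C1GF.Hc_mul hj.1 (by omega)
  rw [Finset.sum_congr rfl hsum, C1GF.final_identity n, C1GF.Rn, C1GF.Ioc_zero_eq_Icc_one]
end

section
/- As formal power series modulo 2, (q;q)_∞ · ∑_{n≥0} q^{n(n+1)}/(q²;q²)_n ≡ ∑_{n∈ℤ} q^{2n²+n} (mod 2). -/
open PowerSeries Finset

namespace Aux19

abbrev R := PowerSeries (ZMod 2)

lemma two_eq_zero : (2 : R) = 0 := by
  have h1 : (2 : R) = PowerSeries.C (R := ZMod 2) (2 : ZMod 2) :=
    (map_ofNat (PowerSeries.C (R := ZMod 2)) 2).symm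
  rw [h1, show (2 : ZMod 2) = 0 from rfl, map_zero]

lemma neg_eq (f : R) : -f = f := by
  have h : f + f = 0 := by
    have := congrArg (· * f) two_eq_zero
    simpa [two_mul] using this
  linear_combination -h

lemma one_add (k : ℕ) : (1 : R) + X ^ k = 1 - X ^ k := by
  rw [sub_eq_add_neg, neg_eq]

noncomputable def Pp (c n : ℕ) : R := ∏ k ∈ Icc 1 n, (1 - X ^ (c * k))

lemma Pp_zero (c : ℕ) : Pp c 0 = 1 := by simp [Pp]

lemma Pp_succ (c n : ℕ) : Pp c (n + 1) = Pp c n * (1 - X ^ (c * (n + 1))) := by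
  rw [Pp, Pp, Finset.prod_Icc_succ_top (by omega)]

lemma constCoeff_Pp (c n : ℕ) (hc : 0 < c) : constantCoeff (R := ZMod 2) (Pp c n) = 1 := by
  induction n with
  | zero => simp [Pp_zero]
  | succ n ih =>
      rw [Pp_succ, map_mul, ih, one_mul, map_sub, map_one, map_pow, constantCoeff_X,
        zero_pow (by positivity)]
      simp

lemma Pp_inv_mul (c n : ℕ) (hc : 0 < c) : (Pp c n)⁻¹ * Pp c n = 1 :=
  PowerSeries.inv_mul_cancel _ (by rw [constCoeff_Pp c n hc]; exact one_ne_zero)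

lemma dvd_prod_sub_one (s : Finset ℕ) (f : ℕ → ℕ) (d : ℕ) (h : ∀ k ∈ s, d ≤ f k) :
    (X : R) ^ d ∣ (∏ k ∈ s, (1 - X ^ (f k))) - 1 := by
  classical
  induction s using Finset.induction with
  | empty => simp
  | @insert a s ha ih =>
      rw [Finset.prod_insert ha]
      have h1 : (X : R) ^ d ∣ (∏ k ∈ s, (1 - X ^ (f k))) - 1 :=
        ih fun k hk => h k (Finset.mem_insert_of_mem hk)
      have h2 : (X : R) ^ d ∣ X ^ (f a) := pow_dvd_pow _ (h a (Finset.mem_insert_self a s))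
      have e : (1 - (X : R) ^ (f a)) * (∏ k ∈ s, (1 - X ^ (f k))) - 1
          = ((∏ k ∈ s, (1 - X ^ (f k))) - 1) - X ^ (f a) * ∏ k ∈ s, (1 - X ^ (f k)) := by ring
      rw [e]
      exact dvd_sub h1 (h2.mul_right _)

lemma Icc_one_eq_Ioc (n : ℕ) : Icc 1 n = Ioc 0 n := Finset.Icc_add_one_left_eq_Ioc 0 n

lemma Pp_split (c a b : ℕ) (hab : a ≤ b) :
    Pp c b = Pp c a * ∏ k ∈ Ioc a b, (1 - X ^ (c * k)) := by
  rw [Pp, Pp, Icc_one_eq_Ioc, Icc_one_eq_Ioc,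
    Finset.prod_Ioc_consecutive _ (Nat.zero_le a) hab]

lemma dvd_Pp_sub (c a b : ℕ) (hab : b ≤ a) : (X : R) ^ (c * (b + 1)) ∣ Pp c a - Pp c b := by
  rw [Pp_split c b a hab]
  have e : Pp c b * (∏ k ∈ Ioc b a, (1 - X ^ (c * k))) - Pp c b
      = Pp c b * ((∏ k ∈ Ioc b a, (1 - X ^ (c * k))) - 1) := by ring
  rw [e]
  exact ((dvd_prod_sub_one _ _ _ (fun k hk => by
    have := (Finset.mem_Ioc.mp hk).1
    exact Nat.mul_le_mul_left c this)).mul_left _)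

noncomputable def Bb (c : ℕ) : ℕ → ℤ → R
  | 0, n => if n = 0 then 1 else 0
  | (M+1), n => Bb c M n + X ^ (c * ((M : ℤ) + 1 - n).toNat) * Bb c M (n - 1)

lemma Bb_zero_def (c : ℕ) (n : ℤ) : Bb c 0 n = if n = 0 then 1 else 0 := rfl
lemma Bb_succ (c M : ℕ) (n : ℤ) :
    Bb c (M+1) n = Bb c M n + X ^ (c * ((M : ℤ) + 1 - n).toNat) * Bb c M (n - 1) := rfl

lemma Bb_neg (c : ℕ) (M : ℕ) (n : ℤ) (h : n < 0) : Bb c M n = 0 := by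
  induction M generalizing n with
  | zero => rw [Bb_zero_def]; simp [show n ≠ 0 by omega]
  | succ M ih => rw [Bb_succ, ih n h, ih (n-1) (by omega)]; ring

lemma Bb_gt (c : ℕ) (M : ℕ) (n : ℤ) (h : (M : ℤ) < n) : Bb c M n = 0 := by
  induction M generalizing n with
  | zero => rw [Bb_zero_def]; simp [show n ≠ 0 by omega]
  | succ M ih =>
      rw [Bb_succ, ih n (by push_cast; omega), ih (n-1) (by push_cast; omega)]; ring

lemma Bb_zero' (c : ℕ) (M : ℕ) : Bb c M 0 = 1 := by
  induction M with
  | zero => rw [Bb_zero_def]; simp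
  | succ M ih => rw [Bb_succ, ih, Bb_neg c M (0-1) (by omega)]; ring

lemma Bb_self (c : ℕ) (M : ℕ) : Bb c M M = 1 := by
  induction M with
  | zero => rw [Bb_zero_def]; simp
  | succ M ih =>
      rw [Bb_succ, Bb_gt c M (M+1:ℕ) (by push_cast; omega)]
      have e1 : ((M:ℤ) + 1 - ((M:ℕ)+1:ℕ)) = 0 := by push_cast; ring
      have e2 : (((M:ℕ)+1:ℕ) : ℤ) - 1 = (M:ℤ) := by push_cast; ring
      rw [e1, e2, ih]
      simp

lemma pascal2 (c : ℕ) (M : ℕ) (n : ℤ) :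
    Bb c (M+1) n = Bb c M (n-1) + X ^ (c * n.toNat) * Bb c M n := by
  induction M generalizing n with
  | zero =>
      rw [Bb_succ]
      by_cases h0 : n = 0
      · subst h0; simp [Bb_zero_def]
      by_cases h1 : n = 1
      · subst h1; simp [Bb_zero_def]
      · simp [Bb_zero_def, h0, h1, show n - 1 ≠ 0 by omega]
  | succ M ih =>
      have hL : Bb c (M+1+1) n
          = (Bb c M (n-1) + X ^ (c * n.toNat) * Bb c M n)
            + X ^ (c * ((↑(M+1) : ℤ) + 1 - n).toNat) *
              (Bb c M (n-1-1) + X ^ (c * (n-1).toNat) * Bb c M (n-1)) := by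
        rw [Bb_succ c (M+1) n, ih n, ih (n-1)]
      have hcast : ((M:ℤ) + 1 - (n - 1)) = ((↑(M+1) : ℤ) + 1 - n) := by push_cast; ring
      have hR : Bb c (M+1) (n-1) + X ^ (c * n.toNat) * Bb c (M+1) n
          = (Bb c M (n-1) + X ^ (c * ((↑(M+1) : ℤ) + 1 - n).toNat) * Bb c M (n-1-1))
            + X ^ (c * n.toNat) *
              (Bb c M n + X ^ (c * ((M:ℤ) + 1 - n).toNat) * Bb c M (n-1)) := by
        rw [Bb_succ c M (n-1), Bb_succ c M n, hcast]
      rw [hL, hR]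
      by_cases h : 0 ≤ n - 1 ∧ n - 1 ≤ (M : ℤ)
      · have he : (((↑(M+1) : ℤ) + 1 - n).toNat + (n-1).toNat)
            = (n.toNat + ((M:ℤ) + 1 - n).toNat) := by omega
        calc (Bb c M (n-1) + X ^ (c * n.toNat) * Bb c M n)
              + X ^ (c * ((↑(M+1) : ℤ) + 1 - n).toNat) *
                (Bb c M (n-1-1) + X ^ (c * (n-1).toNat) * Bb c M (n-1))
            = (Bb c M (n-1) + X ^ (c * n.toNat) * Bb c M n)
              + X ^ (c * ((↑(M+1) : ℤ) + 1 - n).toNat) * Bb c M (n-1-1)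
              + X ^ (c * ((↑(M+1) : ℤ) + 1 - n).toNat + c * (n-1).toNat) * Bb c M (n-1) := by
              rw [pow_add]; ring
          _ = _ := by
              rw [show c * ((↑(M+1) : ℤ) + 1 - n).toNat + c * (n-1).toNat
                  = c * n.toNat + c * ((M:ℤ) + 1 - n).toNat by
                    rw [← Nat.mul_add, ← Nat.mul_add, he]]
              rw [pow_add]; ring
      · have hz : Bb c M (n - 1) = 0 := by
          rcases (not_and_or.mp h) with h' | h'
          · exact Bb_neg c M _ (by omega)
          · exact Bb_gt c M _ (by omega)
        rw [hz]; ring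

lemma Bb_mul_Pp (c : ℕ) (M n : ℕ) (h : n ≤ M) :
    Bb c M (n : ℤ) * (Pp c n * Pp c (M - n)) = Pp c M := by
  induction M generalizing n with
  | zero =>
      interval_cases n
      simp [Bb_zero_def, Pp_zero]
  | succ M ih =>
      rcases Nat.eq_zero_or_pos n with rfl | hn1
      · rw [Bb_succ]
        simp only [Nat.cast_zero]
        rw [Bb_zero', Bb_neg c M (0-1:ℤ) (by omega)]
        simp [Pp_zero]
      rcases eq_or_lt_of_le h with rfl | hlt
      · rw [Bb_succ, Bb_gt c M _ (by push_cast; omega)]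
        have e1 : ((M:ℤ) + 1 - (↑(M+1):ℤ)).toNat = 0 := by push_cast; omega
        have e2 : ((↑(M+1):ℤ) - 1) = (M : ℤ) := by push_cast; ring
        rw [e1, e2, Bb_self]
        simp [Pp_zero]
      · have hnM : n ≤ M := by omega
        have IH1 := ih n hnM
        have IH2 := ih (n-1) (by omega)
        rw [Bb_succ]
        have ecast : ((M:ℤ) + 1 - (n:ℤ)).toNat = M + 1 - n := by omega
        have ncast : ((n:ℤ) - 1) = ((n-1 : ℕ) : ℤ) := by omega
        rw [ecast, ncast]
        have hp1 : Pp c n = Pp c (n-1) * (1 - X ^ (c * n)) := by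
          have := Pp_succ c (n-1)
          rwa [show n - 1 + 1 = n by omega] at this
        have hp2 : Pp c (M + 1 - n) = Pp c (M - n) * (1 - X ^ (c * (M + 1 - n))) := by
          have := Pp_succ c (M-n)
          rwa [show M - n + 1 = M + 1 - n by omega] at this
        have hp3 : Pp c (M + 1) = Pp c M * (1 - X ^ (c * (M + 1))) := Pp_succ c M
        have hx : (X : R) ^ (c * (M + 1 - n)) * X ^ (c * n) = X ^ (c * (M + 1)) := by
          rw [← pow_add, ← Nat.mul_add, show M + 1 - n + n = M + 1 by omega]
        have hM2 : M - (n-1) = M + 1 - n := by omega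
        rw [hM2] at IH2
        rw [hp1] at IH1
        rw [hp2] at IH2
        rw [hp1, hp2, hp3]
        linear_combination (1 - X ^ (c * (M + 1 - n))) * IH1
          + X ^ (c * (M + 1 - n)) * (1 - X ^ (c * n)) * IH2 - Pp c M * hx

lemma qbinom (N : ℕ) :
    Pp 2 N = ∑ n ∈ range (N + 1), X ^ (n * (n + 1)) * Bb 2 N (n : ℤ) := by
  induction N with
  | zero =>
      rw [Pp_zero, Finset.sum_range_one]
      norm_num [Bb_zero_def]
  | succ N ih =>
      have step : ∀ n ∈ range (N + 2),
          X ^ (n * (n + 1)) * Bb 2 (N+1) (n : ℤ)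
          = X ^ (n * (n + 1)) * Bb 2 N (n : ℤ)
            + X ^ (n * (n + 1)) * (X ^ (2 * ((N:ℤ) + 1 - n).toNat) * Bb 2 N ((n:ℤ) - 1)) := by
        intro n _
        rw [Bb_succ]; ring
      rw [Finset.sum_congr rfl step, Finset.sum_add_distrib]
      have hS1 : ∑ n ∈ range (N + 2), X ^ (n * (n + 1)) * Bb 2 N (n : ℤ) = Pp 2 N := by
        rw [Finset.sum_range_succ, Bb_gt 2 N _ (by push_cast; omega), ← ih]
        ring
      have hmerge : ∀ (a b : ℕ) (f : R), X^a * (X^b * f) = X^(a+b) * f := by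
        intro a b f; rw [pow_add]; ring
      have hS2 : ∑ n ∈ range (N + 2),
          X ^ (n * (n + 1)) * (X ^ (2 * ((N:ℤ) + 1 - n).toNat) * Bb 2 N ((n:ℤ) - 1))
          = X ^ (2 * (N + 1)) * Pp 2 N := by
        rw [Finset.sum_range_succ']
        have h0 : (X:R) ^ (0 * (0 + 1)) *
            (X ^ (2 * ((N:ℤ) + 1 - ((0:ℕ):ℤ)).toNat) * Bb 2 N (((0:ℕ):ℤ) - 1)) = 0 := by
          rw [Bb_neg 2 N _ (by omega)]; ring
        rw [h0, add_zero]
        have hterm : ∀ n ∈ range (N + 1),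
            X ^ ((n+1) * ((n+1) + 1)) *
              (X ^ (2 * ((N:ℤ) + 1 - ((n+1:ℕ):ℤ)).toNat) * Bb 2 N (((n+1:ℕ):ℤ) - 1))
            = X ^ (2 * (N + 1)) * (X ^ (n * (n + 1)) * Bb 2 N (n : ℤ)) := by
          intro n hn
          have hn' : n ≤ N := Nat.lt_succ_iff.mp (Finset.mem_range.mp hn)
          have e1 : (2 * ((N:ℤ) + 1 - ((n+1:ℕ):ℤ)).toNat) = 2 * (N - n) := by omega
          have e2 : (((n+1:ℕ):ℤ) - 1) = (n : ℤ) := by push_cast; ring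
          have e3 : (n+1)*((n+1)+1) + 2*(N-n) = 2*(N+1) + n*(n+1) := by
            zify [hn']; ring
          rw [e1, e2, hmerge, hmerge, e3]
        rw [Finset.sum_congr rfl hterm, ← Finset.mul_sum, ← ih]
      rw [hS1, hS2, Pp_succ, ← one_add]
      ring

lemma ee_nonneg (j : ℤ) : 0 ≤ 2*j^2+j := by nlinarith [sq_nonneg (4*j+1)]

lemma shrink (N : ℕ) (a b : ℤ) (ha : a ≤ -(N:ℤ)) (hb : (N:ℤ) ≤ b) :
    ∑ i ∈ Icc a b, X ^ (2*i^2+i).toNat * Bb 4 (2*N) ((N:ℤ)+i)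
    = ∑ i ∈ Icc (-(N:ℤ)) (N:ℤ), X ^ (2*i^2+i).toNat * Bb 4 (2*N) ((N:ℤ)+i) := by
  symm
  apply Finset.sum_subset
  · intro x hx
    rw [Finset.mem_Icc] at hx ⊢
    omega
  · intro x hx hnx
    rw [Finset.mem_Icc] at hx
    simp only [Finset.mem_Icc, not_and_or, not_le] at hnx
    have hz : Bb 4 (2*N) ((N:ℤ)+x) = 0 := by
      rcases hnx with h | h
      · exact Bb_neg _ _ _ (by omega)
      · exact Bb_gt _ _ _ (by push_cast; omega)
    rw [hz, mul_zero]

lemma shift1 (N : ℕ) (a b : ℤ) :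
    ∑ j ∈ Icc a b, (X ^ (2*(j+1)^2+(j+1)).toNat * Bb 4 (2*N) ((N:ℤ)+(j+1)))
    = ∑ i ∈ Icc (a+1) (b+1), X ^ (2*i^2+i).toNat * Bb 4 (2*N) ((N:ℤ)+i) := by
  rw [← Finset.map_add_right_Icc a b 1, Finset.sum_map]
  rfl

lemma shiftm1 (N : ℕ) (a b : ℤ) :
    ∑ j ∈ Icc a b, (X ^ (2*(j-1)^2+(j-1)).toNat * Bb 4 (2*N) ((N:ℤ)+(j-1)))
    = ∑ i ∈ Icc (a-1) (b-1), X ^ (2*i^2+i).toNat * Bb 4 (2*N) ((N:ℤ)+i) := by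
  rw [show a - 1 = a + (-1) by ring, show b - 1 = b + (-1) by ring,
    ← Finset.map_add_right_Icc a b (-1), Finset.sum_map]
  simp only [addRightEmbedding_apply]
  apply Finset.sum_congr rfl
  intro j hj
  rw [show j + (-1) = j - 1 by ring]

set_option maxHeartbeats 1000000 in
lemma jtp (N : ℕ) :
    ∑ j ∈ Icc (-(N:ℤ)) (N:ℤ), X ^ (2*j^2+j).toNat * Bb 4 (2*N) ((N:ℤ)+j)
    = (∏ k ∈ Icc 1 N, ((1:R) - X ^ (4*k-1))) * ∏ k ∈ Icc 1 N, ((1:R) - X ^ (4*k-3)) := by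
  have hmerge : ∀ (a b : ℕ) (f : R), (X:R)^a * (X^b * f) = X^(a+b) * f := by
    intro a b f; rw [pow_add]; ring
  induction N with
  | zero =>
      norm_num
      try simp [Bb_zero_def]
  | succ N ih =>
      have hcast : ((N+1:ℕ):ℤ) = (N:ℤ)+1 := by push_cast; ring
      rw [hcast]
      have expand : ∀ j ∈ Icc (-((N:ℤ)+1)) ((N:ℤ)+1),
          X ^ (2*j^2+j).toNat * Bb 4 (2*(N+1)) (((N:ℤ)+1)+j)
          = X ^ (2*j^2+j).toNat * Bb 4 (2*N) ((N:ℤ)+j)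
            + X ^ (4*N+1) * (X ^ (2*(j+1)^2+(j+1)).toNat * Bb 4 (2*N) ((N:ℤ)+(j+1)))
            + X ^ (4*N+3) * (X ^ (2*(j-1)^2+(j-1)).toNat * Bb 4 (2*N) ((N:ℤ)+(j-1)))
            + X ^ (8*N+4) * (X ^ (2*j^2+j).toNat * Bb 4 (2*N) ((N:ℤ)+j)) := by
        intro j hj
        rw [Finset.mem_Icc] at hj
        obtain ⟨hj1, hj2⟩ := hj
        have hBb : Bb 4 (2*(N+1)) (((N:ℤ)+1)+j)
            = Bb 4 (2*N) ((N:ℤ)+j)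
              + X ^ (4*((N:ℤ)+1+j).toNat) * Bb 4 (2*N) ((N:ℤ)+(j+1))
              + X ^ (4*((N:ℤ)+1-j).toNat) * (Bb 4 (2*N) ((N:ℤ)+(j-1))
                  + X ^ (4*((N:ℤ)+j).toNat) * Bb 4 (2*N) ((N:ℤ)+j)) := by
          rw [show 2*(N+1) = 2*N+1+1 by ring, Bb_succ 4 (2*N+1) _,
            pascal2 4 (2*N) _, pascal2 4 (2*N) _]
          have a1 : ((N:ℤ)+1)+j - 1 = (N:ℤ)+j := by ring
          have a2 : ((2*N+1:ℕ):ℤ) + 1 - (((N:ℤ)+1)+j) = (N:ℤ)+1-j := by push_cast; ring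
          have a3 : ((N:ℤ)+1)+j = (N:ℤ)+(j+1) := by ring
          have a4 : (N:ℤ)+j - 1 = (N:ℤ)+(j-1) := by ring
          have a5 : (((N:ℤ)+1)+j).toNat = ((N:ℤ)+1+j).toNat := by omega
          rw [a2, a1, a4, a5]
          try rw [show ((N:ℤ)+1)+j = (N:ℤ)+(j+1) by ring]
          try ring
        -- exponent lemmas
        have q1 : 2*(j+1)^2+(j+1) = (2*j^2+j) + (4*j+3) := by ring
        have q3 : 2*(j-1)^2+(j-1) = (2*j^2+j) + (1-4*j) := by ring
        have hE := ee_nonneg j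
        have hE2 := ee_nonneg (j+1); rw [q1] at hE2
        have hE3 := ee_nonneg (j-1); rw [q3] at hE3
        have e2 : (2*j^2+j).toNat + 4*((N:ℤ)+1+j).toNat
            = (4*N+1) + (2*(j+1)^2+(j+1)).toNat := by
          rw [q1]
          generalize hg : 2*j^2+j = E at hE hE2 ⊢
          omega
        have e3 : (2*j^2+j).toNat + 4*((N:ℤ)+1-j).toNat
            = (4*N+3) + (2*(j-1)^2+(j-1)).toNat := by
          rw [q3]
          generalize hg : 2*j^2+j = E at hE hE3 ⊢
          omega
        have m2 : X ^ (2*j^2+j).toNat * (X ^ (4*((N:ℤ)+1+j).toNat) * Bb 4 (2*N) ((N:ℤ)+(j+1)))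
            = X ^ (4*N+1) * (X ^ (2*(j+1)^2+(j+1)).toNat * Bb 4 (2*N) ((N:ℤ)+(j+1))) := by
          rw [hmerge, hmerge, e2]
        have m3 : X ^ (2*j^2+j).toNat * (X ^ (4*((N:ℤ)+1-j).toNat) * Bb 4 (2*N) ((N:ℤ)+(j-1)))
            = X ^ (4*N+3) * (X ^ (2*(j-1)^2+(j-1)).toNat * Bb 4 (2*N) ((N:ℤ)+(j-1))) := by
          rw [hmerge, hmerge, e3]
        rw [hBb]
        by_cases hc : 0 ≤ (N:ℤ)+j
        · have e4 : (2*j^2+j).toNat + 4*((N:ℤ)+1-j).toNat + 4*((N:ℤ)+j).toNat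
              = (8*N+4) + (2*j^2+j).toNat := by
            generalize hg : 2*j^2+j = E at hE ⊢
            omega
          have m4 : X ^ (2*j^2+j).toNat *
                (X ^ (4*((N:ℤ)+1-j).toNat) * (X ^ (4*((N:ℤ)+j).toNat) * Bb 4 (2*N) ((N:ℤ)+j)))
              = X ^ (8*N+4) * (X ^ (2*j^2+j).toNat * Bb 4 (2*N) ((N:ℤ)+j)) := by
            rw [hmerge, hmerge, hmerge, e4]
          linear_combination m2 + m3 + m4
        · have hF : Bb 4 (2*N) ((N:ℤ)+j) = 0 := Bb_neg _ _ _ (by omega)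
          have hF' : Bb 4 (2*N) ((N:ℤ)+(j-1)) = 0 := Bb_neg _ _ _ (by omega)
          rw [hF, hF']
          linear_combination m2
      rw [Finset.sum_congr rfl expand]
      rw [Finset.sum_add_distrib, Finset.sum_add_distrib, Finset.sum_add_distrib]
      rw [← Finset.mul_sum, ← Finset.mul_sum, ← Finset.mul_sum]
      rw [shift1 N _ _, shiftm1 N _ _]
      rw [shrink N (-((N:ℤ)+1)) ((N:ℤ)+1) (by omega) (by omega)]
      rw [shrink N (-((N:ℤ)+1)+1) (((N:ℤ)+1)+1) (by omega) (by omega)]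
      rw [shrink N (-((N:ℤ)+1)-1) (((N:ℤ)+1)-1) (by omega) (by omega)]
      rw [Finset.prod_Icc_succ_top (by omega : 1 ≤ N+1), Finset.prod_Icc_succ_top (by omega : 1 ≤ N+1)]
      rw [show 4*(N+1)-1 = 4*N+3 by omega, show 4*(N+1)-3 = 4*N+1 by omega]
      have final : ((1:R) - X^(4*N+3)) * (1 - X^(4*N+1))
          = 1 + X^(4*N+1) + X^(4*N+3) + X^(8*N+4) := by
        rw [← one_add (4*N+3), ← one_add (4*N+1), show 8*N+4 = (4*N+3)+(4*N+1) by ring, pow_add]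
        ring
      rw [ih]
      linear_combination (-((∏ k ∈ Icc 1 N, ((1:R) - X ^ (4*k-1))) *
        ∏ k ∈ Icc 1 N, ((1:R) - X ^ (4*k-3)))) * final

lemma coeff_eq_of_dvd (m : ℕ) (f g : R) (h : (X:R)^(m+1) ∣ f - g) :
    (coeff (R := ZMod 2) m) f = (coeff (R := ZMod 2) m) g := by
  have h0 := (PowerSeries.X_pow_dvd_iff.mp h) m (by omega)
  rw [map_sub] at h0
  exact sub_eq_zero.mp h0

lemma prod_Icc_split (g : ℕ → R) (a b : ℕ) (hab : a ≤ b) :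
    ∏ k ∈ Icc 1 b, g k = (∏ k ∈ Icc 1 a, g k) * ∏ k ∈ Ioc a b, g k := by
  rw [Icc_one_eq_Ioc, Icc_one_eq_Ioc, Finset.prod_Ioc_consecutive _ (Nat.zero_le a) hab]

lemma prod_split (g : ℕ → R) (m : ℕ) :
    ∏ k ∈ Icc 1 (2*m), g k = (∏ j ∈ Icc 1 m, g (2*j-1)) * ∏ j ∈ Icc 1 m, g (2*j) := by
  induction m with
  | zero => simp
  | succ m ih =>
      rw [show 2*(m+1) = 2*m+1+1 by ring, Finset.prod_Icc_succ_top (by omega),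
        Finset.prod_Icc_succ_top (by omega),
        Finset.prod_Icc_succ_top (by omega : 1 ≤ m+1) (fun j => g (2*j-1)),
        Finset.prod_Icc_succ_top (by omega : 1 ≤ m+1) (fun j => g (2*j)), ih]
      rw [show 2*(m+1)-1 = 2*m+1 by omega, show 2*(m+1) = 2*m+1+1 by ring]
      ring

lemma inv_sub_Bb (m n : ℕ) (hn : n ≤ m) :
    (Pp 2 n)⁻¹ - Bb 2 m (n:ℤ)
    = (Pp 2 n)⁻¹ * (Pp 2 (m-n))⁻¹ * (Pp 2 (m-n) - Pp 2 m) := by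
  have h1 := Pp_inv_mul 2 n (by norm_num)
  have h2 := Pp_inv_mul 2 (m-n) (by norm_num)
  have hmul := Bb_mul_Pp 2 m n hn
  linear_combination (Bb 2 m (n:ℤ) * (Pp 2 (m-n))⁻¹ * Pp 2 (m-n)) * h1
    + (Bb 2 m (n:ℤ) - (Pp 2 n)⁻¹) * h2
    + (-((Pp 2 n)⁻¹ * (Pp 2 (m-n))⁻¹)) * hmul

lemma euler_dvd (m : ℕ) :
    (X:R)^(m+1) ∣ (∑ n ∈ range (m+1), X ^ (n*(n+1)) * (Pp 2 n)⁻¹) - Pp 2 m := by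
  rw [qbinom m, ← Finset.sum_sub_distrib]
  apply Finset.dvd_sum
  intro n hn
  have hnm : n ≤ m := Nat.lt_succ_iff.mp (Finset.mem_range.mp hn)
  have e : X ^ (n*(n+1)) * (Pp 2 n)⁻¹ - X ^ (n*(n+1)) * Bb 2 m (n:ℤ)
      = X ^ (n*(n+1)) * ((Pp 2 n)⁻¹ * (Pp 2 (m-n))⁻¹ * (Pp 2 (m-n) - Pp 2 m)) := by
    rw [← inv_sub_Bb m n hnm]; ring
  rw [e]
  obtain ⟨t, ht⟩ := dvd_Pp_sub 2 m (m-n) (by omega)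
  have e2 : Pp 2 (m-n) - Pp 2 m = X ^ (2*((m-n)+1)) * (-t) := by
    rw [mul_neg, ← ht]; ring
  rw [e2]
  have hle : m + 1 ≤ n*(n+1) + 2*((m-n)+1) := by
    have h1 : n ≤ n*n := by
      rcases Nat.eq_zero_or_pos n with rfl | hp
      · simp
      · exact Nat.le_mul_of_pos_left n hp
    have h2 : n*(n+1) = n*n + n := by ring
    omega
  calc (X:R)^(m+1) ∣ X ^ (n*(n+1) + 2*((m-n)+1)) := pow_dvd_pow _ hle
    _ ∣ X ^ (n*(n+1)) * ((Pp 2 n)⁻¹ * (Pp 2 (m-n))⁻¹ * (X ^ (2*((m-n)+1)) * (-t))) :=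
        ⟨(Pp 2 n)⁻¹ * (Pp 2 (m-n))⁻¹ * (-t), by rw [pow_add]; ring⟩

lemma PpPp (m : ℕ) : Pp 2 m * Pp 2 m = Pp 4 m := by
  unfold Pp
  rw [← Finset.prod_mul_distrib]
  apply Finset.prod_congr rfl
  intro k _
  have e : (1 - (X:R)^(2*k)) * (1 - X^(2*k)) = 1 - (2:R)*X^(2*k) + X^(2*k) * X^(2*k) := by ring
  rw [e, two_eq_zero, ← pow_add, show 2*k+2*k = 4*k by ring, ← one_add (4*k)]
  ring

lemma wbound (m t : ℕ) (h : 2*t*t ≤ m + t) : m + 1 ≤ 4*(m - t) + 4 := by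
  have htm : t ≤ m := by nlinarith
  zify [htm]
  nlinarith [sq_nonneg (2*(t:ℤ) - 1), sq_nonneg ((t:ℤ) - 1)]

lemma Bb_Pp_sub_one (m : ℕ) (j : ℤ) (hj1 : -(m:ℤ) ≤ j) (hj2 : j ≤ (m:ℤ))
    (hee : (2*j^2+j).toNat ≤ m) :
    (X:R)^(m+1) ∣ Bb 4 (2*m) ((m:ℤ)+j) * Pp 4 m - 1 := by
  have hadef : ((m:ℤ)+j) = (((( (m:ℤ)+j ).toNat) : ℕ) : ℤ) := by omega
  set a := ((m:ℤ)+j).toNat with ha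
  have ha2m : a ≤ 2*m := by omega
  have hmul := Bb_mul_Pp 4 (2*m) a ha2m
  have h1 := Pp_inv_mul 4 a (by norm_num)
  have h2 := Pp_inv_mul 4 (2*m-a) (by norm_num)
  have key : Bb 4 (2*m) (a:ℤ) * Pp 4 m - 1
      = (Pp 4 a)⁻¹ * (Pp 4 (2*m-a))⁻¹ * (Pp 4 m * Pp 4 (2*m) - Pp 4 a * Pp 4 (2*m-a)) := by
    linear_combination (1 - Bb 4 (2*m) (a:ℤ) * Pp 4 m) * h1
      + ((Pp 4 a)⁻¹ * Pp 4 a * (1 - Bb 4 (2*m) (a:ℤ) * Pp 4 m)) * h2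
      + ((Pp 4 a)⁻¹ * (Pp 4 (2*m-a))⁻¹ * Pp 4 m) * hmul
  rw [hadef, key]
  set w := min a (2*m-a) with hw
  set v := max a (2*m-a) with hv
  have hwm : w ≤ m := by omega
  have hmv : m ≤ v := by omega
  have hv2m : v ≤ 2*m := by omega
  have hs1 := Pp_split 4 w m hwm
  have hs2 := Pp_split 4 v (2*m) hv2m
  have hPaPb : Pp 4 a * Pp 4 (2*m - a) = Pp 4 w * Pp 4 v := by
    rcases le_total a (2*m-a) with hab | hab
    · rw [hw, hv, min_eq_left hab, max_eq_right hab]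
    · rw [hw, hv, min_eq_right hab, max_eq_left hab]; ring
  have hE1 : (X:R)^(4*(w+1)) ∣ (∏ k ∈ Ioc w m, (1 - X ^ (4*k))) - 1 :=
    dvd_prod_sub_one _ (fun k => 4*k) _ (fun k hk => by
      have := (Finset.mem_Ioc.mp hk).1; show 4*(w+1) ≤ 4*k; omega)
  have hE2 : (X:R)^(4*(w+1)) ∣ (∏ k ∈ Ioc v (2*m), (1 - X ^ (4*k))) - 1 :=
    dvd_prod_sub_one _ (fun k => 4*k) _ (fun k hk => by
      have := (Finset.mem_Ioc.mp hk).1; show 4*(w+1) ≤ 4*k; omega)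
  have hEE : (X:R)^(4*(w+1)) ∣
      (∏ k ∈ Ioc w m, (1 - X ^ (4*k))) * (∏ k ∈ Ioc v (2*m), (1 - X ^ (4*k))) - 1 := by
    have e : (∏ k ∈ Ioc w m, (1 - (X:R) ^ (4*k))) * (∏ k ∈ Ioc v (2*m), (1 - X ^ (4*k))) - 1
        = (∏ k ∈ Ioc w m, (1 - X ^ (4*k))) * ((∏ k ∈ Ioc v (2*m), (1 - X ^ (4*k))) - 1)
          + ((∏ k ∈ Ioc w m, (1 - X ^ (4*k))) - 1) := by ring
    rw [e]
    exact dvd_add (hE2.mul_left _) hE1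
  have hdiff : Pp 4 m * Pp 4 (2*m) - Pp 4 a * Pp 4 (2*m-a)
      = Pp 4 w * Pp 4 v *
        ((∏ k ∈ Ioc w m, (1 - X ^ (4*k))) * (∏ k ∈ Ioc v (2*m), (1 - X ^ (4*k))) - 1) := by
    rw [hPaPb]
    nth_rewrite 1 [hs1]
    nth_rewrite 1 [hs2]
    ring
  rw [hdiff]
  -- exponent bound
  have ht1 := Int.natAbs_mul_self' j
  have ht2 : -(j.natAbs:ℤ) ≤ j := by
    have := Int.abs_eq_natAbs j
    have h' := neg_abs_le j
    omega
  have hzm : 2*j^2 + j ≤ (m:ℤ) := by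
    have h' := Int.toNat_of_nonneg (ee_nonneg j)
    calc 2*j^2 + j = (((2*j^2+j).toNat : ℕ) : ℤ) := h'.symm
      _ ≤ (m:ℤ) := by exact_mod_cast hee
  have hq : 2 * (j.natAbs:ℤ) * (j.natAbs:ℤ) ≤ (m:ℤ) + (j.natAbs:ℤ) := by
    nlinarith [ht1, ht2, hzm]
  have hqn : 2 * j.natAbs * j.natAbs ≤ m + j.natAbs := by exact_mod_cast hq
  have hwt : w = m - j.natAbs := by omega
  have hmle : m + 1 ≤ 4*(w+1) := by
    have := wbound m j.natAbs hqn
    omega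
  calc (X:R)^(m+1) ∣ X^(4*(w+1)) := pow_dvd_pow _ hmle
    _ ∣ (Pp 4 a)⁻¹ * (Pp 4 (2*m-a))⁻¹ * (Pp 4 w * Pp 4 v *
        ((∏ k ∈ Ioc w m, (1 - X ^ (4*k))) * (∏ k ∈ Ioc v (2*m), (1 - X ^ (4*k))) - 1)) := by
        obtain ⟨t, htt⟩ := hEE
        exact ⟨(Pp 4 a)⁻¹ * (Pp 4 (2*m-a))⁻¹ * (Pp 4 w * Pp 4 v * t), by rw [htt]; ring⟩

lemma count (m : ℕ) :
    ({k : ℤ | 2 * k ^ 2 + k = (m:ℤ)}.ncard : ZMod 2)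
    = ∑ j ∈ Icc (-(m:ℤ)) (m:ℤ), (if m = (2*j^2+j).toNat then (1:ZMod 2) else 0) := by
  classical
  have hset : {k : ℤ | 2 * k ^ 2 + k = (m:ℤ)}
      = ↑((Icc (-(m:ℤ)) (m:ℤ)).filter (fun j => m = (2*j^2+j).toNat)) := by
    ext k
    simp only [Set.mem_setOf_eq, Finset.coe_filter, Set.mem_setOf_eq, Finset.mem_Icc]
    constructor
    · intro h
      refine ⟨⟨?_, ?_⟩, ?_⟩
      · rcases le_or_gt 0 k with hk | hk
        · omega
        · have hk1 : k + 1 ≤ 0 := by omega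
          have hp : 0 ≤ (-k) * (-(k+1)) := mul_nonneg (by omega) (by omega)
          nlinarith [h, hp]
      · nlinarith [sq_nonneg k, h]
      · rw [h]; simp
    · rintro ⟨⟨hk1, hk2⟩, hm⟩
      have h' := Int.toNat_of_nonneg (ee_nonneg k)
      subst hm
      exact h'.symm
  rw [hset, Set.ncard_coe_finset, Finset.sum_boole]

end Aux19

set_option maxHeartbeats 4000000 in
open Aux19 in
/-- Coefficientwise form (over `ZMod 2`) of
`(q;q)_∞ ∑_{n≥0} q^{n(n+1)}/(q²;q²)_n ≡ ∑_{k∈ℤ} q^{2k²+k} (mod 2)`.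
For the `m`-th coefficient, only factors `(1-q^k)` with `k ≤ m` and summands with `n ≤ m`
can contribute, so the truncations capture the full identity. -/
theorem mod_two_identity_19 (m : ℕ) :
    PowerSeries.coeff (R := ZMod 2) m
      ((∏ k ∈ Finset.Icc 1 m, (1 - (X : (ZMod 2)⟦X⟧) ^ k)) *
        ∑ n ∈ Finset.range (m + 1),
          (X : (ZMod 2)⟦X⟧) ^ (n * (n + 1)) *
            (∏ k ∈ Finset.Icc 1 n, (1 - (X : (ZMod 2)⟦X⟧) ^ (2 * k)))⁻¹) =
    ({k : ℤ | 2 * k ^ 2 + k = (m : ℤ)}.ncard : ZMod 2) := by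
  classical
  set Q : R := ∏ k ∈ Finset.Icc 1 m, (1 - (X : (ZMod 2)⟦X⟧) ^ k) with hQdef
  set Od : R := ∏ j ∈ Finset.Icc 1 m, (1 - (X : R) ^ (2*j-1)) with hOddef
  set Od1 : R := ∏ k ∈ Finset.Icc 1 m, (1 - (X : R) ^ (4*k-1)) with hOd1def
  set Od3 : R := ∏ k ∈ Finset.Icc 1 m, (1 - (X : R) ^ (4*k-3)) with hOd3def
  have hA : PowerSeries.coeff (R := ZMod 2) m
      (Q * ∑ n ∈ Finset.range (m + 1),
          (X : R) ^ (n * (n + 1)) *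
            (∏ k ∈ Finset.Icc 1 n, (1 - (X : R) ^ (2 * k)))⁻¹)
      = PowerSeries.coeff (R := ZMod 2) m (Q * Pp 2 m) := by
    apply coeff_eq_of_dvd
    have e : Q * (∑ n ∈ Finset.range (m + 1),
          (X : R) ^ (n * (n + 1)) *
            (∏ k ∈ Finset.Icc 1 n, (1 - (X : R) ^ (2 * k)))⁻¹) - Q * Pp 2 m
        = ((∑ n ∈ Finset.range (m + 1),
          (X : R) ^ (n * (n + 1)) *
            (∏ k ∈ Finset.Icc 1 n, (1 - (X : R) ^ (2 * k)))⁻¹) - Pp 2 m) * Q := by ring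
    rw [e]
    exact (euler_dvd m).mul_right Q
  have hQT : Q * (∏ k ∈ Finset.Ioc m (2*m), (1 - (X:R)^k)) = Od * Pp 2 m := by
    rw [hQdef, hOddef, ← prod_Icc_split (fun k => 1 - (X:R)^k) m (2*m) (by omega),
      prod_split (fun k => 1 - (X:R)^k) m]
    rfl
  have hBdvd : (X:R)^(m+1) ∣ Od * Pp 2 m - Q := by
    rw [← hQT]
    have e : Q * (∏ k ∈ Finset.Ioc m (2*m), (1 - (X:R)^k)) - Q
        = Q * ((∏ k ∈ Finset.Ioc m (2*m), (1 - (X:R)^k)) - 1) := by ring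
    rw [e]
    exact (dvd_prod_sub_one (Finset.Ioc m (2*m)) (fun k => k) (m+1) (fun k hk => by
      have := (Finset.mem_Ioc.mp hk).1; show m+1 ≤ k; omega)).mul_left Q
  have hB : PowerSeries.coeff (R := ZMod 2) m (Q * Pp 2 m)
      = PowerSeries.coeff (R := ZMod 2) m (Od * Pp 2 m * Pp 2 m) := by
    apply coeff_eq_of_dvd
    have e : Q * Pp 2 m - Od * Pp 2 m * Pp 2 m = (Q - Od * Pp 2 m) * Pp 2 m := by ring
    rw [e]
    exact (dvd_sub_comm.mp hBdvd).mul_right _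
  have hC : Od * Pp 2 m * Pp 2 m = Od * Pp 4 m := by rw [mul_assoc, PpPp]
  have hOdT : Od * (∏ j ∈ Finset.Ioc m (2*m), (1 - (X:R)^(2*j-1))) = Od3 * Od1 := by
    rw [hOddef, hOd1def, hOd3def,
      ← prod_Icc_split (fun j => 1 - (X:R)^(2*j-1)) m (2*m) (by omega),
      prod_split (fun j => 1 - (X:R)^(2*j-1)) m]
    congr 1
    · exact Finset.prod_congr rfl (fun i hi => by
        have h1 := (Finset.mem_Icc.mp hi).1
        show 1 - (X:R)^(2*(2*i-1)-1) = 1 - X^(4*i-3)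
        rw [show 2*(2*i-1)-1 = 4*i-3 by omega])
    · exact Finset.prod_congr rfl (fun i _ => by
        show 1 - (X:R)^(2*(2*i)-1) = 1 - X^(4*i-1)
        rw [show 2*(2*i)-1 = 4*i-1 by omega])
  have hDdvd : (X:R)^(m+1) ∣ Od3 * Od1 - Od := by
    rw [← hOdT]
    have e : Od * (∏ j ∈ Finset.Ioc m (2*m), (1 - (X:R)^(2*j-1))) - Od
        = Od * ((∏ j ∈ Finset.Ioc m (2*m), (1 - (X:R)^(2*j-1))) - 1) := by ring
    rw [e]
    exact (dvd_prod_sub_one (Finset.Ioc m (2*m)) (fun j => 2*j-1) (m+1) (fun k hk => by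
      have := (Finset.mem_Ioc.mp hk).1; show m+1 ≤ 2*k-1; omega)).mul_left Od
  have hD : PowerSeries.coeff (R := ZMod 2) m (Od * Pp 4 m)
      = PowerSeries.coeff (R := ZMod 2) m ((Od3 * Od1) * Pp 4 m) := by
    apply coeff_eq_of_dvd
    have e : Od * Pp 4 m - (Od3 * Od1) * Pp 4 m = (Od - Od3 * Od1) * Pp 4 m := by ring
    rw [e]
    exact (dvd_sub_comm.mp hDdvd).mul_right _
  have hjtp := jtp m
  rw [← hOd1def, ← hOd3def] at hjtp
  have hE : PowerSeries.coeff (R := ZMod 2) m ((Od3 * Od1) * Pp 4 m)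
      = PowerSeries.coeff (R := ZMod 2) m
        (∑ j ∈ Finset.Icc (-(m:ℤ)) (m:ℤ), (X:R)^((2*j^2+j).toNat)) := by
    rw [show Od3 * Od1 = Od1 * Od3 from mul_comm _ _, ← hjtp, Finset.sum_mul]
    apply coeff_eq_of_dvd
    rw [← Finset.sum_sub_distrib]
    apply Finset.dvd_sum
    intro j hj
    rw [Finset.mem_Icc] at hj
    have e : (X:R)^((2*j^2+j).toNat) * Bb 4 (2*m) ((m:ℤ)+j) * Pp 4 m - X^((2*j^2+j).toNat)
        = X^((2*j^2+j).toNat) * (Bb 4 (2*m) ((m:ℤ)+j) * Pp 4 m - 1) := by ring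
    rw [e]
    by_cases hee : (2*j^2+j).toNat ≤ m
    · exact (Bb_Pp_sub_one m j hj.1 hj.2 hee).mul_left _
    · exact dvd_trans (pow_dvd_pow _ (by omega : m+1 ≤ (2*j^2+j).toNat))
        (dvd_mul_right _ _)
  have hF : PowerSeries.coeff (R := ZMod 2) m
        (∑ j ∈ Finset.Icc (-(m:ℤ)) (m:ℤ), (X:R)^((2*j^2+j).toNat))
      = ∑ j ∈ Finset.Icc (-(m:ℤ)) (m:ℤ),
          (if m = (2*j^2+j).toNat then (1:ZMod 2) else 0) := by
    rw [map_sum]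
    exact Finset.sum_congr rfl (fun j _ => PowerSeries.coeff_X_pow m _)
  rw [hA, hB, hC, hD, hE, hF, count m]
end
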